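/- arXiv:2207.00886 — 3 statements merged into one kernel-verified Lean document; each statement's English description precedes it below -/
import Mathlib

section
/- For every positive integer n, the rows of B^{[n]} labeled by even-weight binary vectors of length n are eigenvectors of K^{[n]} with eigenvalue 1, and the rows labeled by odd-weight vectors are eigenvectors with eigenvalue −1. -/
open Matrix Finset

noncomputable def K : Matrix (Fin 2) (Fin 2) ℝ := (1 / Real.sqrt 2) • !![1, 1; 1, -1]

noncomputable def B : Matrix (Fin 2) (Fin 2) ℝ :=
  !![1, Real.sqrt 2 - 1; 1, -Real.sqrt 2 - 1]

/-- n-th Kronecker power of a 2×2 matrix, indexed by binary vectors of length n. -/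
noncomputable def kronPow (M : Matrix (Fin 2) (Fin 2) ℝ) (n : ℕ) :
    Matrix (Fin n → Fin 2) (Fin n → Fin 2) ℝ :=
  fun u v => ∏ i, M (u i) (v i)

def wt {n : ℕ} (v : Fin n → Fin 2) : ℕ := (univ.filter fun i => v i = 1).card

lemma row_eig (a b : Fin 2) :
    ∑ w : Fin 2, B a w * K w b = (-1 : ℝ) ^ (if a = 1 then 1 else 0 : ℕ) * B a b := by
  have h2 : Real.sqrt 2 * Real.sqrt 2 = 2 := Real.mul_self_sqrt (by norm_num)
  have hpos : Real.sqrt 2 > 0 := Real.sqrt_pos.mpr (by norm_num)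
  fin_cases a <;> fin_cases b <;>
    simp [B, K, Fin.sum_univ_two] <;> field_simp <;> nlinarith [h2, hpos]

lemma key (n : ℕ) (v : Fin n → Fin 2) :
    (kronPow B n v) ᵥ* (kronPow K n) = ((-1 : ℝ) ^ (wt v)) • kronPow B n v := by
  funext u
  have : ((kronPow B n v) ᵥ* (kronPow K n)) u
      = ∑ w : Fin n → Fin 2, ∏ i, (B (v i) (w i) * K (w i) (u i)) := by
    simp [vecMul, dotProduct, kronPow, ← Finset.prod_mul_distrib]
  rw [this, ← Fintype.prod_sum (fun i (j : Fin 2) => B (v i) j * K j (u i))]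
  have : ∀ i : Fin n, ∑ j : Fin 2, B (v i) j * K j (u i)
      = (-1 : ℝ) ^ (if v i = 1 then 1 else 0 : ℕ) * B (v i) (u i) := fun i => row_eig _ _
  rw [Finset.prod_congr rfl (fun i _ => this i), Finset.prod_mul_distrib,
    Finset.prod_pow_eq_pow_sum]
  have hsum : ∑ i : Fin n, (if v i = 1 then 1 else 0 : ℕ) = wt v := by
    rw [wt, Finset.card_filter]
  rw [hsum]
  simp [kronPow, Pi.smul_apply, smul_eq_mul]

lemma kron_ne (n : ℕ) (v : Fin n → Fin 2) : kronPow B n v ≠ 0 := by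
  intro h
  have := congrFun h (fun _ => 0)
  simp only [kronPow, Pi.zero_apply] at this
  have hone : ∀ i : Fin n, B (v i) 0 = 1 := by
    intro i
    have h01 : v i = 0 ∨ v i = 1 := by omega
    rcases h01 with h | h <;> simp [B, h]
  rw [Finset.prod_congr rfl (fun i _ => hone i)] at this
  simp at this

/-- The rows of B^{[n]} labeled by even-weight binary vectors are eigenvectors of
K^{[n]} (acting on row vectors) with eigenvalue 1, and those labeled by odd-weight
vectors are eigenvectors with eigenvalue −1. -/
theorem stmt_4 (n : ℕ) (hn : 0 < n) (v : Fin n → Fin 2) :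
    (Even (wt v) →
      Module.End.HasEigenvector (kronPow K n).vecMulLinear (1 : ℝ) (kronPow B n v)) ∧
    (¬ Even (wt v) →
      Module.End.HasEigenvector (kronPow K n).vecMulLinear (-1 : ℝ) (kronPow B n v)) := by
  constructor <;> intro h <;>
    refine ⟨Module.End.mem_eigenspace_iff.mpr ?_, kron_ne n v⟩ <;>
    rw [Matrix.vecMulLinear_apply, key n v]
  · rw [Even.neg_one_pow h]
  · rw [Odd.neg_one_pow (Nat.not_even_iff_odd.mp h)]
end

section
/- The rows of B^{[n]} with even-weight labels are linearly independent and span the eigenspace of eigenvalue 1 of K^{[n]}; in particular this eigenspace has dimension 2^{n−1}. -/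
open Matrix Finset

lemma kronPow_mul (M N : Matrix (Fin 2) (Fin 2) ℝ) (n : ℕ) :
    kronPow (M * N) n = kronPow M n * kronPow N n := by
  ext u v
  simp only [kronPow, Matrix.mul_apply]
  rw [Finset.prod_univ_sum, Fintype.piFinset_univ]
  exact Finset.sum_congr rfl fun w _ => Finset.prod_mul_distrib

lemma kronPow_one (n : ℕ) : kronPow (1 : Matrix (Fin 2) (Fin 2) ℝ) n = 1 := by
  ext u v
  by_cases h : u = v
  · subst h; simp [kronPow, Matrix.one_apply]
  · rw [Matrix.one_apply_ne h]
    obtain ⟨i, hi⟩ := Function.ne_iff.mp h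
    exact Finset.prod_eq_zero (mem_univ i) (Matrix.one_apply_ne hi)

def E : Matrix (Fin 2) (Fin 2) ℝ := !![1, 0; 0, -1]

lemma sqrt2_pos : (0:ℝ) < Real.sqrt 2 := Real.sqrt_pos.mpr (by norm_num)
lemma sqrt2_sq : Real.sqrt 2 * Real.sqrt 2 = 2 := Real.mul_self_sqrt (by norm_num)

lemma BK_eq : B * K = E * B := by
  have h2 := sqrt2_sq
  have h0 := sqrt2_pos.ne'
  ext i j
  fin_cases i <;> fin_cases j <;>
    simp [B, K, E, Matrix.mul_apply, Fin.sum_univ_two, Matrix.smul_apply] <;>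
    field_simp <;> nlinarith [sqrt2_sq, sqrt2_pos]

lemma fin2_cases (a : Fin 2) : a = 0 ∨ a = 1 := by fin_cases a <;> simp

lemma E_offdiag {a b : Fin 2} (h : a ≠ b) : E a b = 0 := by
  fin_cases a <;> fin_cases b <;> simp_all [E]

lemma kronPowE_eq (n : ℕ) :
    kronPow E n = Matrix.diagonal (fun u => (-1:ℝ) ^ (wt u)) := by
  ext u v
  by_cases h : u = v
  · subst h
    rw [Matrix.diagonal_apply_eq]
    have h1 : ∀ i, E (u i) (u i) = if u i = 1 then (-1:ℝ) else 1 := by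
      intro i
      rcases fin2_cases (u i) with h' | h' <;> rw [h'] <;> simp [E]
    calc kronPow E n u u = ∏ i, if u i = 1 then (-1:ℝ) else 1 :=
          Finset.prod_congr rfl fun i _ => h1 i
      _ = ∏ i ∈ univ.filter (fun i => u i = 1), (-1:ℝ) := (Finset.prod_filter _ _).symm
      _ = (-1:ℝ) ^ (wt u) := by rw [Finset.prod_const]; rfl
  · rw [Matrix.diagonal_apply_ne _ h]
    obtain ⟨i, hi⟩ := Function.ne_iff.mp h
    exact Finset.prod_eq_zero (mem_univ i) (E_offdiag hi)

noncomputable def Bi : Matrix (Fin 2) (Fin 2) ℝ :=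
  (-(2 * Real.sqrt 2))⁻¹ • !![-Real.sqrt 2 - 1, 1 - Real.sqrt 2; -1, 1]

lemma B_mul_Bi : B * Bi = 1 := by
  have h2 := sqrt2_sq
  have h0 := sqrt2_pos.ne'
  ext i j
  fin_cases i <;> fin_cases j <;>
    simp [B, Bi, Matrix.mul_apply, Fin.sum_univ_two, Matrix.smul_apply, Matrix.one_apply] <;>
    field_simp <;> nlinarith [sqrt2_sq, sqrt2_pos]

lemma Bi_mul_B : Bi * B = 1 := by
  have h2 := sqrt2_sq
  have h0 := sqrt2_pos.ne'
  ext i j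
  fin_cases i <;> fin_cases j <;>
    simp [B, Bi, Matrix.mul_apply, Fin.sum_univ_two, Matrix.smul_apply, Matrix.one_apply] <;>
    field_simp <;> nlinarith [sqrt2_sq, sqrt2_pos]

lemma vecMul_eq_sum' {m : Type*} [Fintype m] {k : Type*} (v : m → ℝ) (M : Matrix m k ℝ) :
    v ᵥ* M = ∑ i, v i • M i := by
  ext j
  simp [Matrix.vecMul, dotProduct, Finset.sum_apply]

lemma row_vecMul_eq (n : ℕ) (u : Fin n → Fin 2) :
    (kronPow B n u) ᵥ* (kronPow K n) = ((-1:ℝ) ^ (wt u)) • kronPow B n u := by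
  have h : kronPow B n * kronPow K n = kronPow E n * kronPow B n := by
    rw [← kronPow_mul, ← kronPow_mul, BK_eq]
  funext j
  have h1 : ((kronPow B n u) ᵥ* (kronPow K n)) j = (kronPow B n * kronPow K n) u j := by
    simp [Matrix.vecMul, dotProduct, Matrix.mul_apply]
  rw [h1, h, kronPowE_eq, Matrix.diagonal_mul]
  simp

lemma card_even_wt (n : ℕ) (hn : 0 < n) :
    Fintype.card {v : Fin n → Fin 2 // Even (wt v)} = 2 ^ (n - 1) := by
  classical
  have hS : ∑ v : Fin n → Fin 2, (-1:ℤ) ^ (wt v) = 0 := by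
    have h1 : ∀ v : Fin n → Fin 2, (-1:ℤ) ^ (wt v) =
        ∏ i, if v i = 1 then (-1:ℤ) else 1 := by
      intro v
      rw [← Finset.prod_filter, Finset.prod_const]
      rfl
    calc ∑ v : Fin n → Fin 2, (-1:ℤ) ^ (wt v)
        = ∑ v : Fin n → Fin 2, ∏ i, if v i = 1 then (-1:ℤ) else 1 :=
          Finset.sum_congr rfl fun v _ => h1 v
      _ = ∏ i : Fin n, ∑ k : Fin 2, (if k = 1 then (-1:ℤ) else 1) := by
          rw [Finset.prod_univ_sum, Fintype.piFinset_univ]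
      _ = ∏ i : Fin n, (0:ℤ) := Finset.prod_congr rfl (by simp [Fin.sum_univ_two])
      _ = 0 := by
          rw [Finset.prod_const]
          exact zero_pow (by simp [hn.ne'])
  set a := (univ.filter (fun v : Fin n → Fin 2 => Even (wt v))).card with ha
  set b := (univ.filter (fun v : Fin n → Fin 2 => ¬ Even (wt v))).card with hb
  have hab : a + b = 2 ^ n := by
    rw [ha, hb, Finset.card_filter_add_card_filter_not]
    simp [Fintype.card_fun]
  have hS2 : (a:ℤ) - b = 0 := by
    have := Finset.sum_filter_add_sum_filter_not univ
      (fun v : Fin n → Fin 2 => Even (wt v)) (fun v => (-1:ℤ) ^ (wt v))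
    rw [hS] at this
    have he : ∑ v ∈ univ.filter (fun v : Fin n → Fin 2 => Even (wt v)),
        (-1:ℤ) ^ (wt v) = a := by
      rw [ha, Finset.card_eq_sum_ones]
      push_cast
      exact Finset.sum_congr rfl fun v hv => (Finset.mem_filter.mp hv).2.neg_one_pow
    have ho : ∑ v ∈ univ.filter (fun v : Fin n → Fin 2 => ¬ Even (wt v)),
        (-1:ℤ) ^ (wt v) = -b := by
      rw [hb, Finset.card_eq_sum_ones]
      push_cast
      rw [← Finset.sum_neg_distrib]
      exact Finset.sum_congr rfl fun v hv =>
        (Nat.not_even_iff_odd.mp (Finset.mem_filter.mp hv).2).neg_one_pow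
    rw [he, ho] at this
    linarith
  have hab2 : a = b := by exact_mod_cast sub_eq_zero.mp hS2
  have h2a : 2 * a = 2 ^ n := by omega
  rw [Fintype.card_subtype]
  have : 2 ^ n = 2 * 2 ^ (n - 1) := by
    rw [← pow_succ']
    congr 1
    omega
  omega

/-- The rows of B^{[n]} with even-weight labels are linearly independent and span the
eigenspace of eigenvalue 1 of K^{[n]} (acting on row vectors); in particular that
eigenspace has dimension 2^{n−1}. -/
theorem stmt_5 (n : ℕ) (hn : 0 < n) :
    LinearIndependent ℝ (fun v : {v : Fin n → Fin 2 // Even (wt v)} => kronPow B n v.1) ∧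
    Submodule.span ℝ
        (Set.range fun v : {v : Fin n → Fin 2 // Even (wt v)} => kronPow B n v.1) =
      Module.End.eigenspace (kronPow K n).vecMulLinear (1 : ℝ) ∧
    Module.finrank ℝ (Module.End.eigenspace (kronPow K n).vecMulLinear (1 : ℝ)) =
      2 ^ (n - 1) := by
  classical
  have hMbMi : kronPow B n * kronPow Bi n = 1 := by
    rw [← kronPow_mul, B_mul_Bi, kronPow_one]
  have hMiMb : kronPow Bi n * kronPow B n = 1 := by
    rw [← kronPow_mul, Bi_mul_B, kronPow_one]
  -- full rows are linearly independent
  have li_full : LinearIndependent ℝ (fun u : Fin n → Fin 2 => kronPow B n u) := by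
    rw [Fintype.linearIndependent_iff]
    intro g hg u
    have h1 : g ᵥ* kronPow B n = 0 := by rw [vecMul_eq_sum']; exact hg
    have h2 : g = 0 := by
      have := congrArg (fun w => w ᵥ* kronPow Bi n) h1
      simpa [Matrix.vecMul_vecMul, hMbMi, Matrix.vecMul_one, Matrix.zero_vecMul] using this
    exact congrFun h2 u
  have span_top : ⊤ ≤ Submodule.span ℝ (Set.range fun u : Fin n → Fin 2 => kronPow B n u) := by
    intro x _
    have hx : x = ∑ u, (x ᵥ* kronPow Bi n) u • kronPow B n u := by
      rw [← vecMul_eq_sum', Matrix.vecMul_vecMul, hMiMb, Matrix.vecMul_one]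
    rw [hx]
    exact Submodule.sum_mem _ fun u _ =>
      Submodule.smul_mem _ _ (Submodule.subset_span ⟨u, rfl⟩)
  have li_even : LinearIndependent ℝ
      (fun v : {v : Fin n → Fin 2 // Even (wt v)} => kronPow B n v.1) :=
    li_full.comp Subtype.val Subtype.val_injective
  have eig : ∀ u, (kronPow K n).vecMulLinear (kronPow B n u) =
      ((-1:ℝ) ^ (wt u)) • kronPow B n u := by
    intro u
    rw [Matrix.vecMulLinear_apply, row_vecMul_eq]
  have span_eq : Submodule.span ℝ
      (Set.range fun v : {v : Fin n → Fin 2 // Even (wt v)} => kronPow B n v.1) =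
      Module.End.eigenspace (kronPow K n).vecMulLinear (1 : ℝ) := by
    apply le_antisymm
    · rw [Submodule.span_le]
      rintro _ ⟨v, rfl⟩
      rw [SetLike.mem_coe, Module.End.mem_eigenspace_iff, eig, v.2.neg_one_pow, one_smul]
    · intro x hx
      rw [Module.End.mem_eigenspace_iff, one_smul] at hx
      set bb : Module.Basis (Fin n → Fin 2) ℝ ((Fin n → Fin 2) → ℝ) := Module.Basis.mk li_full span_top with hbb
      set c : (Fin n → Fin 2) → ℝ := fun u => bb.repr x u with hc
      have hxsum : x = ∑ u, c u • kronPow B n u := by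
        conv_lhs => rw [← bb.sum_repr x]
        exact Finset.sum_congr rfl fun u _ => by rw [hbb, Module.Basis.coe_mk]
      have hzero : ∑ u, (((-1:ℝ) ^ (wt u)) * c u - c u) • kronPow B n u = 0 := by
        have h1 : (kronPow K n).vecMulLinear x = ∑ u, (((-1:ℝ) ^ (wt u)) * c u) • kronPow B n u := by
          rw [hxsum, map_sum]
          refine Finset.sum_congr rfl fun u _ => ?_
          rw [LinearMap.map_smul, eig, smul_smul, mul_comm]
        calc ∑ u, (((-1:ℝ) ^ (wt u)) * c u - c u) • kronPow B n u
            = ∑ u, (((-1:ℝ) ^ (wt u)) * c u) • kronPow B n u - ∑ u, c u • kronPow B n u := by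
              rw [← Finset.sum_sub_distrib]
              exact Finset.sum_congr rfl fun u _ => sub_smul _ _ _
          _ = (kronPow K n).vecMulLinear x - x := by rw [h1, ← hxsum]
          _ = 0 := by rw [hx, sub_self]
      have hcoeff : ∀ u, ((-1:ℝ) ^ (wt u)) * c u - c u = 0 :=
        Fintype.linearIndependent_iff.mp li_full _ hzero
      have hodd : ∀ u, ¬ Even (wt u) → c u = 0 := by
        intro u hu
        have := hcoeff u
        rw [(Nat.not_even_iff_odd.mp hu).neg_one_pow] at this
        linarith
      rw [hxsum]
      refine Submodule.sum_mem _ fun u _ => ?_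
      by_cases h : Even (wt u)
      · exact Submodule.smul_mem _ _ (Submodule.subset_span ⟨⟨u, h⟩, rfl⟩)
      · rw [hodd u h, zero_smul]; exact Submodule.zero_mem _
  refine ⟨li_even, span_eq, ?_⟩
  rw [← span_eq, finrank_span_eq_card li_even, card_even_wt n hn]
end

section
/- If W ∈ ℝ^{2ⁿ} satisfies W·K^{[n]} = W, then the vector W' = W[0] + ρ·W[1] ∈ ℝ^{2^{n−1}} satisfies W'·K^{[n−1]} = W', where ρ = √2 − 1, W[0] is the first half of W and W[1] is the second half. -/
open Matrix Finset

noncomputable def rho : ℝ := Real.sqrt 2 - 1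

def splitEquiv (m : ℕ) : (Fin 2 × (Fin m → Fin 2)) ≃ (Fin (1 + m) → Fin 2) where
  toFun p := Fin.append (fun _ : Fin 1 => p.1) p.2
  invFun j := (j (Fin.castAdd m 0), fun i => j (Fin.natAdd 1 i))
  left_inv p := by
    ext
    · simp [Fin.append_left]
    · simp [Fin.append_right]
  right_inv j := by
    funext x
    refine Fin.addCases (fun i => ?_) (fun i => ?_) x
    · show Fin.append (fun _ : Fin 1 => j (Fin.castAdd m 0)) _ (Fin.castAdd m i) = _
      rw [Fin.append_left]
      exact congrArg j (congrArg (Fin.castAdd m) (Subsingleton.elim _ _))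
    · show Fin.append _ (fun i => j (Fin.natAdd 1 i)) (Fin.natAdd 1 i) = _
      rw [Fin.append_right]

lemma kronPow_append (m : ℕ) (δ ε : Fin 2) (u v : Fin m → Fin 2) :
    kronPow K (1 + m) (Fin.append (fun _ : Fin 1 => δ) u) (Fin.append (fun _ : Fin 1 => ε) v)
      = K δ ε * kronPow K m u v := by
  unfold kronPow
  rw [Fin.prod_univ_add]
  simp [Fin.append_left, Fin.append_right]

lemma hK00 : K 0 0 = 1 / Real.sqrt 2 := by simp [K]
lemma hK01 : K 0 1 = 1 / Real.sqrt 2 := by simp [K]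
lemma hK10 : K 1 0 = 1 / Real.sqrt 2 := by simp [K]
lemma hK11 : K 1 1 = -(1 / Real.sqrt 2) := by simp [K]

/-- If W ∈ ℝ^{2ⁿ} (n = 1+m) satisfies W·K^{[n]} = W, then W' = W[0] + ρ·W[1]
satisfies W'·K^{[n−1]} = W', where W[δ] is the half of W whose labels start with δ. -/
theorem stmt_13 (m : ℕ) (W : (Fin (1 + m) → Fin 2) → ℝ)
    (hW : vecMul W (kronPow K (1 + m)) = W) :
    vecMul
      (fun v : Fin m → Fin 2 =>
        W (Fin.append (fun _ : Fin 1 => (0 : Fin 2)) v) +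
          rho * W (Fin.append (fun _ : Fin 1 => (1 : Fin 2)) v))
      (kronPow K m) =
    fun v : Fin m → Fin 2 =>
      W (Fin.append (fun _ : Fin 1 => (0 : Fin 2)) v) +
        rho * W (Fin.append (fun _ : Fin 1 => (1 : Fin 2)) v) := by
  set W0 : (Fin m → Fin 2) → ℝ := fun v => W (Fin.append (fun _ : Fin 1 => (0 : Fin 2)) v) with hW0
  set W1 : (Fin m → Fin 2) → ℝ := fun v => W (Fin.append (fun _ : Fin 1 => (1 : Fin 2)) v) with hW1
  have key : ∀ (ε : Fin 2) (v : Fin m → Fin 2),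
      ∑ u : Fin m → Fin 2,
        (W0 u * K 0 ε + W1 u * K 1 ε) * kronPow K m u v
        = W (Fin.append (fun _ : Fin 1 => ε) v) := by
    intro ε v
    have h := congrFun hW (Fin.append (fun _ : Fin 1 => ε) v)
    rw [vecMul, dotProduct] at h
    rw [← Equiv.sum_comp (splitEquiv m)
      (fun u => W u * kronPow K (1 + m) u (Fin.append (fun _ : Fin 1 => ε) v)),
      Fintype.sum_prod_type, Fin.sum_univ_two, ← Finset.sum_add_distrib] at h
    rw [← h]
    apply Finset.sum_congr rfl
    intro u _
    simp only [splitEquiv, Equiv.coe_fn_mk, kronPow_append]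
    ring
  have hne : Real.sqrt 2 ≠ 0 := by positivity
  have h2 : Real.sqrt 2 * Real.sqrt 2 = 2 := Real.mul_self_sqrt (by norm_num)
  have c1 : (1 / Real.sqrt 2) * (1 + rho) = 1 := by
    rw [rho]; field_simp; ring
  have c2 : (1 / Real.sqrt 2) * (1 - rho) = rho := by
    rw [rho]; field_simp; nlinarith [h2]
  funext v
  show ∑ u, (W0 u + rho * W1 u) * kronPow K m u v = W0 v + rho * W1 v
  have e0 := key 0 v
  have e1 := key 1 v
  rw [hK00, hK10] at e0
  rw [hK01, hK11] at e1
  have expand : ∀ u, (W0 u + rho * W1 u) * kronPow K m u v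
      = (W0 u * (1 / Real.sqrt 2) + W1 u * (1 / Real.sqrt 2)) * kronPow K m u v
        + rho * ((W0 u * (1 / Real.sqrt 2) + W1 u * (-(1 / Real.sqrt 2))) * kronPow K m u v) := by
    intro u
    linear_combination (-(W0 u * kronPow K m u v)) * c1 + (-(W1 u * kronPow K m u v)) * c2
  simp only [expand]
  rw [Finset.sum_add_distrib, ← Finset.mul_sum, e0, e1]
end
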